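/- In SP_9, for every positive edge uv there exists a unique vertex z such that both uz and vz are positive edges. -/
import Mathlib

/-- Vertices of `SP_9`, identified with `{0,1,2} × {0,1,2}`. -/
abbrev V9 : Type := Fin 3 × Fin 3

/-- The edge `uv` of `SP_9` is positive: `u ≠ v` and they agree in exactly one coordinate. -/
abbrev pos9 (u v : V9) : Prop :=
  (u.1 = v.1 ∧ u.2 ≠ v.2) ∨ (u.1 ≠ v.1 ∧ u.2 = v.2)

/-- The edge `uv` of `SP_9` is negative: `u ≠ v` and it is not positive. -/
abbrev neg9 (u v : V9) : Prop := u ≠ v ∧ ¬ pos9 u v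

set_option maxHeartbeats 1000000 in
/-- For every positive edge `uv` of `SP_9` there is a unique vertex `z` with
both `uz` and `vz` positive. -/
theorem sp9_pos_edge_unique_common_pos :
    ∀ u v : V9, pos9 u v → ∃! z : V9, pos9 u z ∧ pos9 v z := by
  intro u v h
  simp only [ExistsUnique]
  revert h
  fin_cases u <;> fin_cases v <;> decide
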